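/- For every integer n ≥ 2, the linear coefficient of the Kazhdan–Lusztig polynomial of the braid matroid B_n equals S(n,2) − S(n,n−1) = 2^{n−1} − 1 − n(n−1)/2. -/

import Mathlib

open Finset Polynomial Nat
open scoped Classical

noncomputable instance instPLlfo (n : ℕ) :
    LocallyFiniteOrder (Finpartition (Finset.univ : Finset (Fin n))) :=
  Fintype.toLocallyFiniteOrder

/-- The partition lattice `P(n)`: set partitions of an `n`-element set, ordered by refinement. -/
abbrev PL (n : ℕ) := Finpartition (Finset.univ : Finset (Fin n))

/-- The Möbius function of the partition lattice. -/
noncomputable def mob {n : ℕ} (x y : PL n) : ℤ := IncidenceAlgebra.mu ℤ x y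

/-- The characteristic polynomial of `P(n)`.  `P(n)` is graded of rank `n - 1`, a partition `x`
with `k` blocks having rank `n - k`, so the term of `x` is `μ(⊥,x) t^{(n-1)-(n-k)} = μ(⊥,x) t^{k-1}`. -/
noncomputable def chiP (n : ℕ) : Polynomial ℤ :=
  ∑ x : PL n, C (mob ⊥ x) * X ^ (x.parts.card - 1)

/-- Signed Stirling numbers of the first kind: `t(t-1)⋯(t-n+1) = ∑ₖ s(n,k) tᵏ`. -/
noncomputable def s1 (n k : ℕ) : ℤ :=
  (∏ i ∈ Finset.range n, (X - C (i : ℤ))).coeff k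

/-- Stirling numbers of the second kind: the number of set partitions of an
`n`-set into exactly `k` blocks. -/
noncomputable def S2 (n k : ℕ) : ℕ :=
  Nat.card {P : PL n // P.parts.card = k}

/-- `m(λ)`: the number of set partitions of `{1,…,n}` whose multiset of block sizes is the
number partition `λ ⊢ n`. -/
noncomputable def numOfType (n : ℕ) (l : n.Partition) : ℕ :=
  Nat.card {P : PL n // P.parts.val.map Finset.card = l.parts}

/-- The characteristic polynomial of the lower interval (localization) `[⊥, F]` in `P(n)`;
the interval is graded with `rk x = n - ℓ(x)`, of total rank `(n - ℓ(F)) `, so the term of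
`x ≤ F` is `μ(⊥,x) t^{(n-ℓ(F)) - (n-ℓ(x))} = μ(⊥,x) t^{ℓ(x)-ℓ(F)}`. -/
noncomputable def chiLow (n : ℕ) (F : PL n) : Polynomial ℤ :=
  ∑ x ∈ Finset.univ.filter (fun x : PL n => x ≤ F),
    C (mob ⊥ x) * X ^ (x.parts.card - F.parts.card)


section Aux
variable {n : ℕ}

lemma univ_ne_bot (hn : 1 ≤ n) : (Finset.univ : Finset (Fin n)) ≠ ⊥ := by
  have : Nonempty (Fin n) := ⟨⟨0, by omega⟩⟩
  simpa [Finset.bot_eq_empty] using Finset.univ_nonempty.ne_empty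

lemma PL.card_le (x : PL n) : x.parts.card ≤ n := by
  simpa using x.card_parts_le_card

lemma PL.one_le (hn : 1 ≤ n) (x : PL n) : 1 ≤ x.parts.card := by
  exact (x.parts_nonempty (univ_ne_bot hn)).card_pos

lemma PL.bot_card : ((⊥ : PL n).parts).card = n := by
  simpa using Finpartition.card_bot (Finset.univ : Finset (Fin n))

lemma PL.eq_bot (x : PL n) (h : x.parts.card = n) : x = ⊥ := by
  have hsum : ∑ b ∈ x.parts, b.card = n := by simpa using x.sum_card_parts
  have hall : ∀ b ∈ x.parts, b.card = 1 := by
    have h1 : ∀ b ∈ x.parts, 1 ≤ b.card := fun b hb =>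
      (x.nonempty_of_mem_parts hb).card_pos
    have := (Finset.sum_eq_sum_iff_of_le h1).1 ?_
    · exact fun b hb => ((this b hb).symm)
    · rw [hsum, Finset.sum_const, smul_eq_mul, mul_one, h]
  refine le_antisymm ?_ bot_le
  intro b hb
  obtain ⟨a, ha⟩ := Finset.card_eq_one.1 (hall b hb)
  exact ⟨{a}, Finpartition.mem_bot_iff.2 ⟨a, Finset.mem_univ a, rfl⟩, by simp [ha]⟩

lemma PL.top_card (hn : 1 ≤ n) : ((⊤ : PL n).parts).card = 1 := by
  refine le_antisymm ?_ (PL.one_le hn _)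
  classical
  calc ((⊤ : PL n).parts).card ≤ ({(Finset.univ : Finset (Fin n))} : Finset _).card :=
        Finset.card_le_card (Finpartition.parts_top_subset _)
    _ = 1 := by simp

lemma PL.eq_top (hn : 1 ≤ n) (x : PL n) (h : x.parts.card = 1) : x = ⊤ := by
  obtain ⟨b, hb⟩ := Finset.card_eq_one.1 h
  have hbu : b = Finset.univ := by
    have := x.sup_parts
    rw [hb] at this
    simpa using this
  refine le_antisymm le_top ?_
  intro c hc
  exact ⟨b, by simp [hb], by rw [hbu]; exact Finset.subset_univ c⟩



lemma PL.part_subset_of_le {P Q : PL n} (h : P ≤ Q) {c : Finset (Fin n)}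
    (hc : c ∈ Q.parts) {a : Fin n} (ha : a ∈ c) : P.part a ⊆ c := by
  obtain ⟨d, hd, hsub⟩ := h (P.part_mem.2 (Finset.mem_univ a))
  have hdc : d = c := Q.eq_of_mem_parts hd hc (hsub (P.mem_part (Finset.mem_univ a))) ha
  exact hdc ▸ hsub

lemma PL.card_eq_sum {P Q : PL n} (h : P ≤ Q) :
    P.parts.card = ∑ c ∈ Q.parts, (P.parts.filter (· ⊆ c)).card := by
  classical
  rw [← Finset.card_biUnion]
  · congr 1
    ext b
    simp only [Finset.mem_biUnion, Finset.mem_filter]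
    constructor
    · intro hb
      obtain ⟨c, hc, hbc⟩ := h hb
      exact ⟨c, hc, hb, hbc⟩
    · rintro ⟨c, _, hb, _⟩; exact hb
  · intro c hc c' hc' hne
    simp only [Finset.disjoint_left, Finset.mem_filter]
    rintro b ⟨hb, hbc⟩ ⟨-, hbc'⟩
    obtain ⟨a, ha⟩ := P.nonempty_of_mem_parts hb
    exact hne (Q.eq_of_mem_parts hc hc' (hbc ha) (hbc' ha))

lemma PL.filter_nonempty {P Q : PL n} (h : P ≤ Q) {c : Finset (Fin n)}
    (hc : c ∈ Q.parts) : (P.parts.filter (· ⊆ c)).Nonempty := by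
  obtain ⟨a, ha⟩ := Q.nonempty_of_mem_parts hc
  exact ⟨P.part a, Finset.mem_filter.2 ⟨P.part_mem.2 (Finset.mem_univ a),
    PL.part_subset_of_le h hc ha⟩⟩

lemma PL.card_lt {P Q : PL n} (h : P ≤ Q) (hne : P ≠ Q) :
    Q.parts.card < P.parts.card := by
  rcases lt_or_eq_of_le (Finpartition.card_mono h) with hlt | heq
  · exact hlt
  exfalso
  apply hne
  -- each filter has card 1
  have hsum := PL.card_eq_sum h
  have h1 : ∀ c ∈ Q.parts, 1 ≤ (P.parts.filter (· ⊆ c)).card :=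
    fun c hc => (PL.filter_nonempty h hc).card_pos
  have hone : ∀ c ∈ Q.parts, (P.parts.filter (· ⊆ c)).card = 1 := by
    have := (Finset.sum_eq_sum_iff_of_le h1).1 ?_
    · exact fun c hc => (this c hc).symm
    · rw [← hsum, Finset.sum_const, smul_eq_mul, mul_one, heq]
  -- hence Q ≤ P
  have hQP : Q ≤ P := by
    intro c hc
    obtain ⟨b, hb⟩ := Finset.card_eq_one.1 (hone c hc)
    have hbP : b ∈ P.parts ∧ b ⊆ c := by
      have : b ∈ P.parts.filter (· ⊆ c) := hb ▸ Finset.mem_singleton_self b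
      simpa using this
    refine ⟨b, hbP.1, ?_⟩
    -- c ⊆ b
    intro a ha
    have : P.part a ∈ P.parts.filter (· ⊆ c) := Finset.mem_filter.2
      ⟨P.part_mem.2 (Finset.mem_univ a), PL.part_subset_of_le h hc ha⟩
    rw [hb, Finset.mem_singleton] at this
    exact this ▸ P.mem_part (Finset.mem_univ a)
  exact le_antisymm h hQP

lemma PL.mu_atom (hn : 2 ≤ n) (x : PL n) (h : x.parts.card = n - 1) :
    mob ⊥ x = -1 := by
  have hxb : x ≠ ⊥ := by
    intro hx
    rw [hx, PL.bot_card] at h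
    omega
  have hIco : Finset.Ico (⊥ : PL n) x = {⊥} := by
    ext y
    simp only [Finset.mem_Ico, Finset.mem_singleton, bot_le, true_and]
    constructor
    · intro hy
      have h1 := PL.card_lt hy.le hy.ne
      have h2 := PL.card_le y
      rw [h] at h1
      exact PL.eq_bot y (by omega)
    · rintro rfl
      exact lt_of_le_of_ne bot_le (Ne.symm hxb)
  rw [mob, IncidenceAlgebra.mu_eq_neg_sum_Ico_of_ne (Ne.symm hxb), hIco]
  simp


end Aux

section Coeff
variable {n : ℕ}

lemma S2_eq_filter (k : ℕ) :
    S2 n k = (Finset.univ.filter (fun P : PL n => P.parts.card = k)).card := by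
  rw [S2, Nat.card_eq_fintype_card, Fintype.card_subtype]

lemma chiLow_coeff (F : PL n) (m : ℕ) :
    (chiLow n F).coeff m =
      ∑ x ∈ Finset.univ.filter
        (fun x : PL n => x ≤ F ∧ x.parts.card - F.parts.card = m), mob ⊥ x := by
  rw [chiLow, finset_sum_coeff]
  rw [Finset.sum_filter, Finset.sum_filter]
  apply Finset.sum_congr rfl
  intro x _
  rw [coeff_C_mul, coeff_X_pow]
  by_cases h1 : x ≤ F <;> by_cases h2 : x.parts.card - F.parts.card = m <;>
    simp [h1, h2, eq_comm (a := m)]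

lemma chiLow_coeff_eq_zero (F : PL n) {m : ℕ} (hm : n - F.parts.card < m) :
    (chiLow n F).coeff m = 0 := by
  rw [chiLow_coeff]
  rw [Finset.sum_eq_zero]
  intro x hx
  simp only [Finset.mem_filter, Finset.mem_univ, true_and] at hx
  exfalso
  have := PL.card_le x
  omega

lemma chiLow_coeff_lead (hn : 1 ≤ n) (F : PL n) :
    (chiLow n F).coeff (n - F.parts.card) = 1 := by
  rw [chiLow_coeff]
  have : Finset.univ.filter
      (fun x : PL n => x ≤ F ∧ x.parts.card - F.parts.card = n - F.parts.card) = {⊥} := by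
    ext x
    simp only [Finset.mem_filter, Finset.mem_univ, true_and, Finset.mem_singleton]
    constructor
    · rintro ⟨hle, hcard⟩
      have h1 := Finpartition.card_mono hle
      have h2 := PL.card_le x
      have h3 := PL.card_le F
      exact PL.eq_bot x (by omega)
    · rintro rfl
      exact ⟨bot_le, by rw [PL.bot_card]⟩
  rw [this, Finset.sum_singleton, mob, IncidenceAlgebra.mu_self]

lemma chiLow_coeff_card_one (hn : 2 ≤ n) (F : PL n) (hF : F.parts.card = 1) :
    (chiLow n F).coeff (n - 2) = -(S2 n (n - 1) : ℤ) := by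
  rw [chiLow_coeff]
  have hFtop : F = ⊤ := PL.eq_top (by omega) F hF
  subst hFtop
  have hset : Finset.univ.filter
      (fun x : PL n => x ≤ (⊤ : PL n) ∧ x.parts.card - (⊤ : PL n).parts.card = n - 2) =
      Finset.univ.filter (fun x : PL n => x.parts.card = n - 1) := by
    ext x
    simp only [Finset.mem_filter, Finset.mem_univ, true_and, hF, le_top]
    have h1 := PL.one_le (by omega) x
    have h2 := PL.card_le x
    omega
  rw [hset]
  rw [Finset.sum_congr rfl (fun x hx => PL.mu_atom hn x (by simpa using hx))]
  rw [Finset.sum_const, S2_eq_filter]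
  simp [mul_comm]

lemma filter_card_one (hn : 1 ≤ n) :
    (Finset.univ.filter (fun P : PL n => P.parts.card = 1)).card = 1 := by
  rw [Finset.card_eq_one]
  refine ⟨⊤, ?_⟩
  ext P
  simp only [Finset.mem_filter, Finset.mem_univ, true_and, Finset.mem_singleton]
  constructor
  · exact fun h => PL.eq_top hn P h
  · rintro rfl; exact PL.top_card hn

lemma S2_n_n : S2 n n = 1 := by
  rw [S2_eq_filter, Finset.card_eq_one]
  refine ⟨⊥, ?_⟩
  ext P
  simp only [Finset.mem_filter, Finset.mem_univ, true_and, Finset.mem_singleton]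
  constructor
  · exact fun h => PL.eq_bot P h
  · rintro rfl; exact PL.bot_card

lemma S2_n_1 (hn : 1 ≤ n) : S2 n 1 = 1 := by
  rw [S2_eq_filter]; exact filter_card_one hn

end Coeff

section Count2
variable {n : ℕ}

/-- The two-block partition `{A, univ \ A}`. -/
noncomputable def twoPart (A : Finset (Fin n)) (h1 : A.Nonempty) (h2 : A ≠ Finset.univ) :
    PL n where
  parts := {A, Finset.univ \ A}
  supIndep := by
    have hne : A ≠ Finset.univ \ A := by
      obtain ⟨a, ha⟩ := h1
      intro h
      have ha2 := ha
      rw [h] at ha2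
      exact (Finset.mem_sdiff.1 ha2).2 ha
    rw [Finset.supIndep_pair hne]
    exact Finset.disjoint_sdiff
  sup_parts := by
    rw [Finset.sup_insert, Finset.sup_singleton, id]
    simpa using Finset.union_sdiff_of_subset (Finset.subset_univ A)
  bot_notMem := by
    simp only [Finset.bot_eq_empty, Finset.mem_insert, Finset.mem_singleton]
    push_neg
    constructor
    · exact h1.ne_empty.symm
    · intro h
      rw [eq_comm, Finset.sdiff_eq_empty_iff_subset] at h
      exact h2 (le_antisymm (Finset.subset_univ A) h)

lemma twoPart_parts_card (A : Finset (Fin n)) (h1 : A.Nonempty) (h2 : A ≠ Finset.univ) :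
    (twoPart A h1 h2).parts.card = 2 := by
  rw [twoPart, Finset.card_pair]
  obtain ⟨a, ha⟩ := h1
  intro h
  have ha2 := ha
  rw [h] at ha2
  exact (Finset.mem_sdiff.1 ha2).2 ha

lemma two_parts_eq (P : PL n) (hc : P.parts.card = 2) {z : Fin n} :
    P.parts = {P.part z, Finset.univ \ P.part z} := by
  obtain ⟨b, c, hbc, hparts⟩ := Finset.card_eq_two.1 hc
  have hb : b ∈ P.parts := by rw [hparts]; simp
  have hcm : c ∈ P.parts := by rw [hparts]; simp
  have hdisj : Disjoint b c := P.disjoint hb hcm hbc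
  have hsup : b ∪ c = Finset.univ := by
    have := P.sup_parts
    rw [hparts] at this
    simpa [Finset.sup_insert, Finset.sup_singleton] using this
  have hcb : c = Finset.univ \ b := by
    ext a
    simp only [Finset.mem_sdiff, Finset.mem_univ, true_and]
    constructor
    · intro ha; exact fun hab => (Finset.disjoint_left.1 hdisj) hab ha
    · intro ha
      have : a ∈ b ∪ c := hsup ▸ Finset.mem_univ a
      rcases Finset.mem_union.1 this with h | h
      · exact absurd h ha
      · exact h
  have hbc' : b = Finset.univ \ c := by
    rw [hcb, Finset.sdiff_sdiff_self_left, Finset.univ_inter]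
  have hz := P.part_mem.2 (Finset.mem_univ z)
  rw [hparts] at hz ⊢
  rcases Finset.mem_insert.1 hz with h | h
  · rw [h, ← hcb]
  · rw [Finset.mem_singleton] at h
    rw [h, ← hbc']
    exact Finset.pair_comm b c

lemma filter_mem_ne_univ_card (hn : 2 ≤ n) (z : Fin n) :
    (Finset.univ.filter (fun A : Finset (Fin n) => z ∈ A ∧ A ≠ Finset.univ)).card =
      2 ^ (n - 1) - 1 := by
  have hT : (Finset.univ.filter (fun A : Finset (Fin n) => z ∈ A)).card = 2 ^ (n - 1) := by
    rw [Finset.card_bij' (fun A _ => A.erase z) (fun B _ => insert z B)]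
    · rw [Finset.card_powerset, Finset.card_erase_of_mem (Finset.mem_univ z),
        Finset.card_univ, Fintype.card_fin]
    · intro A hA
      simp only [Finset.mem_powerset]
      exact Finset.erase_subset_erase z (Finset.subset_univ A)
    · intro B hB
      simp
    · intro A hA
      simp only [Finset.mem_filter] at hA
      exact Finset.insert_erase hA.2
    · intro B hB
      simp only [Finset.mem_powerset] at hB
      exact Finset.erase_insert (fun h => by simpa using hB h)
  have hE : Finset.univ.filter (fun A : Finset (Fin n) => z ∈ A ∧ A ≠ Finset.univ) =
      (Finset.univ.filter (fun A : Finset (Fin n) => z ∈ A)).erase Finset.univ := by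
    ext A
    simp only [Finset.mem_filter, Finset.mem_univ, true_and, Finset.mem_erase]
    tauto
  rw [hE, Finset.card_erase_of_mem (by simp), hT]

lemma S2_two (hn : 2 ≤ n) : S2 n 2 = 2 ^ (n - 1) - 1 := by
  have hz : (0 : ℕ) < n := by omega
  set z : Fin n := ⟨0, hz⟩
  rw [S2_eq_filter, ← filter_mem_ne_univ_card hn z]
  refine Finset.card_bij' (fun P _ => P.part z)
    (fun A hA => twoPart A ⟨z, (Finset.mem_filter.1 hA).2.1⟩ (Finset.mem_filter.1 hA).2.2)
    ?_ ?_ ?_ ?_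
  · intro P hP
    simp only [Finset.mem_filter, Finset.mem_univ, true_and] at hP ⊢
    constructor
    · exact P.mem_part (Finset.mem_univ z)
    · intro h
      have hparts := two_parts_eq P hP (z := z)
      have : Finset.univ \ P.part z ∈ P.parts := by rw [hparts]; simp
      have hne := P.nonempty_of_mem_parts this
      rw [h] at hne
      simp [Finset.sdiff_self] at hne
  · intro A hA
    simp only [Finset.mem_filter, Finset.mem_univ, true_and]
    exact twoPart_parts_card _ _ _
  · intro P hP
    simp only [Finset.mem_filter, Finset.mem_univ, true_and] at hP
    apply Finpartition.ext
    exact (two_parts_eq P hP (z := z)).symm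
  · intro A hA
    simp only [Finset.mem_filter, Finset.mem_univ, true_and] at hA
    exact Finpartition.part_eq_of_mem _ (by simp [twoPart]) hA.1

end Count2

section Count3
variable {n : ℕ}

/-- The partition with one block `p` (of size 2) and all other blocks singletons. -/
noncomputable def mergeP (p : Finset (Fin n)) (hp : p.card = 2) : PL n where
  parts := insert p ((Finset.univ \ p).image fun a => ({a} : Finset (Fin n)))
  supIndep := by
    rw [Finset.supIndep_iff_pairwiseDisjoint]
    intro x hx y hy hxy
    simp only [Finset.coe_insert, Set.mem_insert_iff, Finset.coe_image, Set.mem_image,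
      Finset.mem_coe, Finset.mem_sdiff, Finset.mem_univ, true_and] at hx hy
    rcases hx with rfl | ⟨a, ha, rfl⟩ <;> rcases hy with rfl | ⟨b, hb, rfl⟩
    · exact absurd rfl hxy
    · simp only [Function.onFun, id_eq, Finset.disjoint_singleton_right]
      exact hb
    · simp only [Function.onFun, id_eq, Finset.disjoint_singleton_left]
      exact ha
    · simp only [Function.onFun, id_eq, Finset.disjoint_singleton_left, Finset.mem_singleton]
      intro h; exact hxy (by rw [h])
  sup_parts := by
    rw [Finset.sup_insert, Finset.sup_image]
    have : ((Finset.univ \ p).sup (id ∘ fun a => ({a} : Finset (Fin n)))) = Finset.univ \ p :=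
      Finset.sup_singleton_eq_self _
    rw [this, id]
    exact Finset.union_sdiff_of_subset (Finset.subset_univ p)
  bot_notMem := by
    simp only [Finset.bot_eq_empty, Finset.mem_insert, Finset.mem_image]
    push_neg
    refine ⟨?_, ?_⟩
    · intro h; rw [← h] at hp; simp at hp
    · intro a _; exact Finset.singleton_nonempty a
  
lemma mergeP_parts (p : Finset (Fin n)) (hp : p.card = 2) :
    (mergeP p hp).parts = insert p ((Finset.univ \ p).image fun a => ({a} : Finset (Fin n))) :=
  rfl

lemma mergeP_card (p : Finset (Fin n)) (hp : p.card = 2) :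
    (mergeP p hp).parts.card = n - 1 := by
  rw [mergeP_parts, Finset.card_insert_of_notMem, Finset.card_image_of_injective _
    Finset.singleton_injective, Finset.card_sdiff_of_subset (Finset.subset_univ p)]
  · have h2n : 2 ≤ n := by
      have := Finset.card_le_univ p
      rw [hp] at this
      simpa using this
    rw [Finset.card_univ, Fintype.card_fin, hp]
    omega
  · intro h
    obtain ⟨a, -, ha⟩ := Finset.mem_image.1 h
    rw [← ha] at hp
    simp at hp

lemma mergeP_part_mem (p : Finset (Fin n)) (hp : p.card = 2) {a : Fin n} (ha : a ∈ p) :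
    (mergeP p hp).part a = p :=
  Finpartition.part_eq_of_mem _ (Finset.mem_insert_self _ _) ha

lemma mergeP_part_not_mem (p : Finset (Fin n)) (hp : p.card = 2) {a : Fin n} (ha : a ∉ p) :
    (mergeP p hp).part a = {a} := by
  refine Finpartition.part_eq_of_mem _ ?_ (Finset.mem_singleton_self a)
  rw [mergeP_parts]
  exact Finset.mem_insert_of_mem (Finset.mem_image.2 ⟨a, by simp [ha], rfl⟩)

/-- The set of elements lying in a block of size at least 2. -/
noncomputable def bigBlock (P : PL n) : Finset (Fin n) :=
  Finset.univ.filter (fun a => 2 ≤ (P.part a).card)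

lemma bigBlock_eq (P : PL n) {p : Finset (Fin n)} (hp : p ∈ P.parts) (h2 : p.card = 2)
    (hall : ∀ b ∈ P.parts, b ≠ p → b.card = 1) : bigBlock P = p := by
  ext a
  simp only [bigBlock, Finset.mem_filter, Finset.mem_univ, true_and]
  constructor
  · intro h
    have hmem := P.part_mem.2 (Finset.mem_univ a)
    by_cases hne : P.part a = p
    · exact hne ▸ P.mem_part (Finset.mem_univ a)
    · rw [hall _ hmem hne] at h; omega
  · intro h
    rw [Finpartition.part_eq_of_mem _ hp h, h2]

lemma exists_pair (hn : 2 ≤ n) (P : PL n) (hc : P.parts.card = n - 1) :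
    ∃ p ∈ P.parts, p.card = 2 ∧ ∀ b ∈ P.parts, b ≠ p → b.card = 1 := by
  have hsum : ∑ b ∈ P.parts, b.card = n := by simpa using P.sum_card_parts
  have h1 : ∀ b ∈ P.parts, 1 ≤ b.card := fun b hb => (P.nonempty_of_mem_parts hb).card_pos
  have hex : ∃ p ∈ P.parts, 2 ≤ p.card := by
    by_contra h
    push_neg at h
    have : ∑ b ∈ P.parts, b.card ≤ ∑ _b ∈ P.parts, 1 :=
      Finset.sum_le_sum (fun b hb => by have := h b hb; omega)
    rw [hsum, Finset.sum_const, smul_eq_mul, mul_one, hc] at this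
    omega
  obtain ⟨p, hp, h2p⟩ := hex
  have hrest : p.card + ∑ b ∈ P.parts.erase p, b.card = n := by
    rw [Finset.add_sum_erase _ _ hp, hsum]
  have hcard_erase : (P.parts.erase p).card = n - 2 := by
    rw [Finset.card_erase_of_mem hp, hc]; omega
  have hone : ∀ b ∈ P.parts.erase p, b.card = 1 := by
    have hle : ∀ b ∈ P.parts.erase p, 1 ≤ b.card :=
      fun b hb => h1 b (Finset.mem_of_mem_erase hb)
    have hsum2 : ∑ b ∈ P.parts.erase p, b.card = n - 2 := by
      have hge : ∑ b ∈ P.parts.erase p, b.card ≥ ∑ _b ∈ P.parts.erase p, 1 :=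
        Finset.sum_le_sum hle
      rw [Finset.sum_const, smul_eq_mul, mul_one, hcard_erase] at hge
      omega
    have := (Finset.sum_eq_sum_iff_of_le hle).1 ?_
    · exact fun b hb => ((this b hb).symm)
    · rw [hsum2, Finset.sum_const, smul_eq_mul, mul_one, hcard_erase]
  have hsum3 : ∑ b ∈ P.parts.erase p, b.card = n - 2 := by
    rw [Finset.sum_congr rfl hone, Finset.sum_const, smul_eq_mul, mul_one, hcard_erase]
  refine ⟨p, hp, by omega, fun b hb hbne => hone b (Finset.mem_erase.2 ⟨hbne, hb⟩)⟩

lemma parts_eq_merge (P : PL n) {p : Finset (Fin n)} (hp : p ∈ P.parts) (h2 : p.card = 2)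
    (hall : ∀ b ∈ P.parts, b ≠ p → b.card = 1) :
    P.parts = insert p ((Finset.univ \ p).image fun a => ({a} : Finset (Fin n))) := by
  ext b
  simp only [Finset.mem_insert, Finset.mem_image, Finset.mem_sdiff, Finset.mem_univ, true_and]
  constructor
  · intro hb
    by_cases hbp : b = p
    · exact Or.inl hbp
    · obtain ⟨a, ha⟩ := Finset.card_eq_one.1 (hall b hb hbp)
      refine Or.inr ⟨a, ?_, ha.symm⟩
      intro hap
      exact hbp (P.eq_of_mem_parts hb hp (ha ▸ Finset.mem_singleton_self a) hap)
  · rintro (rfl | ⟨a, hap, rfl⟩)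
    · exact hp
    · have hmem := P.part_mem.2 (Finset.mem_univ a)
      have hne : P.part a ≠ p := by
        intro h
        exact hap (h ▸ P.mem_part (Finset.mem_univ a))
      obtain ⟨c, hc⟩ := Finset.card_eq_one.1 (hall _ hmem hne)
      have : a ∈ ({c} : Finset (Fin n)) := hc ▸ P.mem_part (Finset.mem_univ a)
      rw [Finset.mem_singleton] at this
      rw [← this] at hc
      exact hc ▸ hmem

lemma S2_pred (hn : 2 ≤ n) : S2 n (n - 1) = n.choose 2 := by
  rw [S2_eq_filter]
  have : n.choose 2 = (Finset.powersetCard 2 (Finset.univ : Finset (Fin n))).card := by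
    rw [Finset.card_powersetCard, Finset.card_univ, Fintype.card_fin]
  rw [this]
  refine Finset.card_bij' (fun P _ => bigBlock P)
    (fun p hp => mergeP p (Finset.mem_powersetCard.1 hp).2) ?_ ?_ ?_ ?_
  · intro P hP
    simp only [Finset.mem_filter, Finset.mem_univ, true_and] at hP
    obtain ⟨p, hp, h2, hall⟩ := exists_pair hn P hP
    rw [Finset.mem_powersetCard]
    simp only [bigBlock_eq P hp h2 hall]
    exact ⟨Finset.subset_univ p, h2⟩
  · intro p hp
    simp only [Finset.mem_filter, Finset.mem_univ, true_and]
    exact mergeP_card _ _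
  · intro P hP
    simp only [Finset.mem_filter, Finset.mem_univ, true_and] at hP
    obtain ⟨p, hp, h2, hall⟩ := exists_pair hn P hP
    apply Finpartition.ext
    simp only [mergeP_parts, bigBlock_eq P hp h2 hall]
    exact (parts_eq_merge P hp h2 hall).symm
  · intro p hp
    have h2 := (Finset.mem_powersetCard.1 hp).2
    ext a
    simp only [bigBlock, Finset.mem_filter, Finset.mem_univ, true_and]
    constructor
    · intro h
      by_contra hap
      rw [mergeP_part_not_mem p h2 hap] at h
      simp at h
    · intro h
      rw [mergeP_part_mem p h2 h, h2]

end Count3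

/-- `IsBraidKL P` says that `P n` is the Kazhdan–Lusztig polynomial of the braid matroid `Bₙ`
(whose lattice of flats is `P(n)`, of rank `n - 1`): it is `1` in rank `0`, has degree `< rk/2`
in positive rank, and satisfies the defining recursion
`t^{rk} Pₙ(1/t) = ∑_F χ((Bₙ)_F, t) · P((Bₙ)^F, t)`, where the upper interval at a flat `F`
with `ℓ(F)` blocks is the partition lattice `P(ℓ(F))`. -/
def IsBraidKL (P : ℕ → Polynomial ℤ) : Prop :=
  (∀ n, n ≤ 1 → P n = 1) ∧
  (∀ n, 2 ≤ n → 2 * (P n).natDegree < n - 1) ∧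
  (∀ n, 2 ≤ n →
    (P n).reflect (n - 1) = ∑ F : PL n, chiLow n F * P F.parts.card)

lemma keyn (Pf : ℕ → Polynomial ℤ) (hP : IsBraidKL Pf) {n : ℕ} (hn : 2 ≤ n) :
    (Pf n).coeff 1 = (S2 n 2 : ℤ) * (Pf 2).coeff 0 - (S2 n (n - 1) : ℤ) := by
  obtain ⟨h1, h2, h3⟩ := hP
  have hd2 : (Pf 2).natDegree = 0 := by have := h2 2 le_rfl; omega
  have hP2 : Pf 2 = C ((Pf 2).coeff 0) := by
    conv_lhs => rw [Polynomial.eq_C_of_natDegree_eq_zero hd2]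
  have hrec := congrArg (fun q => q.coeff (n - 2)) (h3 n hn)
  simp only [coeff_reflect, finset_sum_coeff] at hrec
  rw [revAt_le (by omega : n - 2 ≤ n - 1), (by omega : n - 1 - (n - 2) = 1)] at hrec
  rw [hrec]
  have hcontrib : ∀ F : PL n,
      (chiLow n F * Pf F.parts.card).coeff (n - 2) =
      ((if F.parts.card = 1 then -(S2 n (n - 1) : ℤ) else 0)
        + (if F.parts.card = 2 then (Pf 2).coeff 0 else 0)) := by
    intro F
    have hk1 := PL.one_le (by omega) F
    have hkn := PL.card_le F
    by_cases hF1 : F.parts.card = 1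
    · rw [hF1, h1 1 le_rfl, mul_one, if_pos rfl, if_neg (by omega), add_zero,
        chiLow_coeff_card_one hn F hF1]
    · by_cases hF2 : F.parts.card = 2
      · rw [hF2, hP2, coeff_mul_C, if_neg (by omega), if_pos rfl, zero_add,
          (by omega : n - 2 = n - F.parts.card), chiLow_coeff_lead (by omega) F, one_mul, coeff_C_zero]
      · rw [if_neg (by omega), if_neg (by omega), add_zero, coeff_mul]
        apply Finset.sum_eq_zero
        rintro ⟨i, j⟩ hij
        rw [Finset.HasAntidiagonal.mem_antidiagonal] at hij
        have hk3 : 3 ≤ F.parts.card := by omega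
        by_cases hi : i ≤ n - F.parts.card
        · have hdk := h2 F.parts.card (by omega)
          have : (Pf F.parts.card).coeff j = 0 :=
            coeff_eq_zero_of_natDegree_lt (by omega)
          rw [this, mul_zero]
        · rw [chiLow_coeff_eq_zero F (by omega), zero_mul]
  calc (∑ F : PL n, (chiLow n F * Pf F.parts.card).coeff (n - 2))
      = ∑ F : PL n, ((if F.parts.card = 1 then -(S2 n (n - 1) : ℤ) else 0)
        + (if F.parts.card = 2 then (Pf 2).coeff 0 else 0)) :=
        Finset.sum_congr rfl (fun F _ => hcontrib F)
    _ = (S2 n 2 : ℤ) * (Pf 2).coeff 0 - (S2 n (n - 1) : ℤ) := by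
        rw [Finset.sum_add_distrib, ← Finset.sum_filter, ← Finset.sum_filter,
          Finset.sum_const, Finset.sum_const, filter_card_one (by omega),
          ← S2_eq_filter]
        simp only [one_smul, nsmul_eq_mul]
        ring

lemma key2 (Pf : ℕ → Polynomial ℤ) (hP : IsBraidKL Pf) : (Pf 2).coeff 0 = 1 := by
  have h := keyn Pf hP (le_refl 2)
  have hd2 : (Pf 2).natDegree = 0 := by have := hP.2.1 2 le_rfl; omega
  have h1 : (Pf 2).coeff 1 = 0 := coeff_eq_zero_of_natDegree_lt (by omega)
  rw [h1, (by norm_num : (2:ℕ) - 1 = 1), S2_n_1 (by norm_num), S2_n_n (n := 2)] at h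
  push_cast at h
  linarith


/-- the linear coefficient of the Kazhdan–Lusztig polynomial of the braid matroid
`Bₙ` equals `S(n,2) − S(n,n−1) = 2^{n−1} − 1 − n(n−1)/2`. -/
theorem stmt6 (P : ℕ → Polynomial ℤ) (hP : IsBraidKL P) (n : ℕ) (hn : 2 ≤ n) :
    (P n).coeff 1 = (S2 n 2 : ℤ) - S2 n (n - 1) ∧
      (P n).coeff 1 = 2 ^ (n - 1) - 1 - (n : ℤ) * ((n : ℤ) - 1) / 2 := by
  have h1 := keyn P hP hn
  rw [key2 P hP, mul_one] at h1
  have hS2 : (S2 n 2 : ℤ) = 2 ^ (n - 1) - 1 := by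
    rw [S2_two hn]
    have h1le : 1 ≤ 2 ^ (n - 1) := Nat.one_le_two_pow
    push_cast [h1le]
    ring
  have hSp : (S2 n (n - 1) : ℤ) = (n : ℤ) * ((n : ℤ) - 1) / 2 := by
    rw [S2_pred hn]
    have hdvd : 2 ∣ n * (n - 1) := by
      have h := Nat.even_mul_succ_self (n - 1)
      rw [(by omega : n - 1 + 1 = n)] at h
      rw [Nat.mul_comm]
      exact h.two_dvd
    have key : ((n.choose 2 : ℕ) : ℤ) * 2 = (n : ℤ) * ((n : ℤ) - 1) := by
      have hc : n.choose 2 * 2 = n * (n - 1) := by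
        rw [Nat.choose_two_right]
        exact Nat.div_mul_cancel hdvd
      calc ((n.choose 2 : ℕ) : ℤ) * 2 = ((n.choose 2 * 2 : ℕ) : ℤ) := by push_cast; ring
        _ = ((n * (n - 1) : ℕ) : ℤ) := by rw [hc]
        _ = (n : ℤ) * ((n : ℤ) - 1) := by push_cast [(by omega : 1 ≤ n)]; ring
    rw [← key]
    exact (Int.mul_ediv_cancel _ two_ne_zero).symm
  exact ⟨h1, by rw [h1, hS2, hSp]⟩
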